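/- Let n = 2m be an even positive integer (m ≥ 1). Then, in the polynomial ring ℝ[t], ∏_{d | n} ψ_d(2t) = 2·(T_{m+1}(t) − T_{m−1}(t)), where the product is over the positive divisors d of n, ψ_d(2t) denotes the composition of ψ_d with the polynomial 2t, and T_k denotes the k-th Chebyshev polynomial of the first kind. -/

import Mathlib

open scoped Real
open Polynomial IntermediateField

noncomputable section

/-- `ψ_d`: the minimal polynomial over ℚ of `2 cos(2π/d)`, regarded as a polynomial in `ℝ[t]`. -/
def psiR (d : ℕ) : ℝ[X] :=
  (minpoly ℚ (2 * Real.cos (2 * π / d))).map (algebraMap ℚ ℝ)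

def Sd (d : ℕ) : Finset ℕ := (Finset.range (d/2+1)).filter (fun j => Nat.Coprime j d)

/-! ### generic helpers -/

lemma prod_X_sub_C_dvd {ι : Type*} (s : Finset ι) (r : ι → ℝ) (p : ℝ[X]) (hp : p ≠ 0)
    (hinj : Set.InjOn r s) (hroot : ∀ i ∈ s, p.IsRoot (r i)) :
    ∏ i ∈ s, (X - C (r i)) ∣ p := by
  have h1 : (s.val.map r).Nodup :=
    Multiset.Nodup.map_on (fun x hx y hy h => hinj hx hy h) s.nodup
  have h2 : s.val.map r ≤ p.roots := by
    rw [Multiset.le_iff_subset h1]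
    intro x hx
    rw [Multiset.mem_map] at hx
    obtain ⟨i, hi, rfl⟩ := hx
    rw [Polynomial.mem_roots hp]
    exact hroot i hi
  have h3 : ∏ i ∈ s, (X - C (r i)) = (Multiset.map (fun a => X - C a) (s.val.map r)).prod := by
    rw [Multiset.map_map]; rfl
  rw [h3]
  exact dvd_trans (Multiset.prod_dvd_prod_of_le (Multiset.map_le_map h2))
    (Polynomial.prod_multiset_X_sub_C_dvd p)

lemma exp_add_inv (θ : ℝ) :
    Complex.exp (θ * Complex.I) + (Complex.exp (θ * Complex.I))⁻¹ =
      ((2 * Real.cos θ : ℝ) : ℂ) := by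
  rw [← Complex.exp_neg]
  push_cast [Complex.ofReal_cos]
  rw [← neg_mul, Complex.exp_mul_I, Complex.exp_mul_I, Complex.cos_neg, Complex.sin_neg]
  ring

lemma zeta_pow (d j : ℕ) :
    (Complex.exp (2 * π * Complex.I / d)) ^ j =
      Complex.exp ((2 * π * j / d : ℝ) * Complex.I) := by
  rw [← Complex.exp_nat_mul]; push_cast; ring_nf

/-! ### integrality -/

lemma cos_integral (d : ℕ) (hd : d ≠ 0) : IsIntegral ℚ (2 * Real.cos (2 * π / d)) := by
  set ζ : ℂ := Complex.exp (2 * π * Complex.I / d) with hζdef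
  have hζ : IsPrimitiveRoot ζ d := Complex.isPrimitiveRoot_exp d hd
  have e1 : ζ + ζ⁻¹ = ((2 * Real.cos (2 * π / d) : ℝ) : ℂ) := by
    have := exp_add_inv (2 * π / d)
    rw [← this, hζdef]
    congr 2 <;> · push_cast; ring
  have h1 : IsIntegral ℚ ζ := (hζ.isIntegral (Nat.pos_of_ne_zero hd)).tower_top
  have h2 : IsIntegral ℚ ζ⁻¹ := (hζ.inv.isIntegral (Nat.pos_of_ne_zero hd)).tower_top
  have h3 : IsIntegral ℚ (ζ + ζ⁻¹) := h1.add h2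
  rw [e1] at h3
  exact (isIntegral_algebraMap_iff (algebraMap ℝ ℂ).injective).mp h3

/-! ### conjugation -/

lemma aeval_conj (d j : ℕ) (hd : d ≠ 0) (hj : j.Coprime d) :
    Polynomial.aeval (2 * Real.cos (2 * π * j / d))
      (minpoly ℚ (2 * Real.cos (2 * π / d))) = 0 := by
  set ζ : ℂ := Complex.exp (2 * π * Complex.I / d) with hζdef
  have hζ : IsPrimitiveRoot ζ d := Complex.isPrimitiveRoot_exp d hd
  have hintZ : IsIntegral ℤ ζ := hζ.isIntegral (Nat.pos_of_ne_zero hd)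
  have hint : IsIntegral ℚ ζ := hintZ.tower_top
  have e1 : ζ + ζ⁻¹ = ((2 * Real.cos (2 * π / d) : ℝ) : ℂ) := by
    have := exp_add_inv (2 * π / d)
    rw [← this, hζdef]
    congr 2 <;> · push_cast; ring
  have e2 : ζ ^ j + (ζ ^ j)⁻¹ = ((2 * Real.cos (2 * π * j / d) : ℝ) : ℂ) := by
    rw [zeta_pow d j, exp_add_inv]
  have hrootQ : Polynomial.aeval (ζ ^ j) (minpoly ℚ ζ) = 0 := by
    have h1 : minpoly ℚ ζ = (minpoly ℤ ζ).map (algebraMap ℤ ℚ) :=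
      minpoly.isIntegrallyClosed_eq_field_fractions' ℚ hintZ
    have h2 := hζ.pow_isRoot_minpoly hj
    have hc : (algebraMap ℚ ℂ).comp (algebraMap ℤ ℚ) = Int.castRingHom ℂ := by
      ext1; simp
    rw [h1, Polynomial.aeval_def, ← Polynomial.eval_map, Polynomial.map_map, hc]
    exact h2
  set g := IntermediateField.AdjoinSimple.gen ℚ ζ with hgdef
  set pb : PowerBasis ℚ ℚ⟮ζ⟯ := IntermediateField.adjoin.powerBasis hint with hpb
  have hgen : pb.gen = g := by rw [hpb, IntermediateField.adjoin.powerBasis_gen]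
  have hgenmap : algebraMap ℚ⟮ζ⟯ ℂ g = ζ := IntermediateField.AdjoinSimple.algebraMap_gen ℚ ζ
  have hming : minpoly ℚ g = minpoly ℚ ζ := by
    rw [← minpoly.algebraMap_eq (algebraMap ℚ⟮ζ⟯ ℂ).injective g, hgenmap]
  have hlift : Polynomial.aeval (ζ ^ j) (minpoly ℚ pb.gen) = 0 := by
    rw [hgen, hming]; exact hrootQ
  set σ : ℚ⟮ζ⟯ →ₐ[ℚ] ℂ := pb.lift (ζ ^ j) hlift with hσ
  have hσg : σ g = ζ ^ j := by rw [← hgen, hσ]; exact pb.lift_gen (ζ ^ j) hlift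
  set αK : ℚ⟮ζ⟯ := g + g⁻¹ with hαK
  have hαKmap : algebraMap ℚ⟮ζ⟯ ℂ αK = ζ + ζ⁻¹ := by
    rw [hαK, map_add, map_inv₀, hgenmap]
  have hmin1 : minpoly ℚ (2 * Real.cos (2 * π / d)) = minpoly ℚ αK := by
    rw [← minpoly.algebraMap_eq (algebraMap ℝ ℂ).injective,
      ← minpoly.algebraMap_eq (algebraMap ℚ⟮ζ⟯ ℂ).injective αK, hαKmap]
    norm_num [e1]
  rw [hmin1]
  have key : Polynomial.aeval ((algebraMap ℝ ℂ) (2 * Real.cos (2 * π * j / d)))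
      (minpoly ℚ αK) = 0 := by
    have : (algebraMap ℝ ℂ) (2 * Real.cos (2 * π * j / d)) = σ αK := by
      rw [hαK, map_add, map_inv₀, hσg]
      norm_num [← e2]
    rw [this, Polynomial.aeval_algHom_apply σ αK, minpoly.aeval, map_zero]
  rw [Polynomial.aeval_algebraMap_apply ℂ _ _] at key
  exact (map_eq_zero_iff _ (algebraMap ℝ ℂ).injective).mp key

/-! ### degree bound -/

set_option synthInstance.maxHeartbeats 1000000 in
set_option maxHeartbeats 1000000 in
lemma deg_le (d : ℕ) (hd : 3 ≤ d) :
    (minpoly ℚ (2 * Real.cos (2 * π / d))).natDegree * 2 ≤ d.totient := by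
  have hd0 : d ≠ 0 := by omega
  set ζ : ℂ := Complex.exp (2 * π * Complex.I / d) with hζdef
  have hζ : IsPrimitiveRoot ζ d := Complex.isPrimitiveRoot_exp d hd0
  have hintZ : IsIntegral ℤ ζ := hζ.isIntegral (Nat.pos_of_ne_zero hd0)
  have hint : IsIntegral ℚ ζ := hintZ.tower_top
  have e1 : ζ + ζ⁻¹ = ((2 * Real.cos (2 * π / d) : ℝ) : ℂ) := by
    have := exp_add_inv (2 * π / d)
    rw [← this, hζdef]
    congr 2 <;> · push_cast; ring
  set g := IntermediateField.AdjoinSimple.gen ℚ ζ with hgdef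
  have hgenmap : algebraMap ℚ⟮ζ⟯ ℂ g = ζ := IntermediateField.AdjoinSimple.algebraMap_gen ℚ ζ
  haveI hfd : FiniteDimensional ℚ ℚ⟮ζ⟯ := IntermediateField.adjoin.finiteDimensional hint
  set αK : ℚ⟮ζ⟯ := g + g⁻¹ with hαKdef
  have hαKmap : algebraMap ℚ⟮ζ⟯ ℂ αK = ζ + ζ⁻¹ := by
    rw [hαKdef, map_add, map_inv₀, hgenmap]
  have hαKint : IsIntegral ℚ αK := IsIntegral.of_finite ℚ αK
  have hmin1 : minpoly ℚ (2 * Real.cos (2 * π / d)) = minpoly ℚ αK := by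
    rw [← minpoly.algebraMap_eq (algebraMap ℝ ℂ).injective,
      ← minpoly.algebraMap_eq (algebraMap ℚ⟮ζ⟯ ℂ).injective αK, hαKmap]
    norm_num [e1]
  rw [hmin1]
  set F : IntermediateField ℚ ℚ⟮ζ⟯ := IntermediateField.adjoin ℚ ({αK} : Set ℚ⟮ζ⟯) with hFdef
  have hrank1 : Module.finrank ℚ ↥F = (minpoly ℚ αK).natDegree :=
    IntermediateField.adjoin.finrank hαKint
  have hrank2 : Module.finrank ℚ ℚ⟮ζ⟯ = d.totient := by
    rw [IntermediateField.adjoin.finrank hint, ← Polynomial.cyclotomic_eq_minpoly_rat hζ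
      (Nat.pos_of_ne_zero hd0), Polynomial.natDegree_cyclotomic]
  haveI : FiniteDimensional ↥F ℚ⟮ζ⟯ := FiniteDimensional.right ℚ ↥F ℚ⟮ζ⟯
  have hgF : g ∉ F := by
    intro hg
    have hQ : ∀ x : ℚ, algebraMap ℚ ℚ⟮ζ⟯ x ∈ Subfield.comap (algebraMap ℚ⟮ζ⟯ ℂ)
        ((algebraMap ℝ ℂ).fieldRange) := by
      intro x
      simp only [Subfield.mem_comap, RingHom.mem_fieldRange]
      refine ⟨(x : ℝ), ?_⟩
      rw [← IsScalarTower.algebraMap_apply]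
      norm_num
    set N : IntermediateField ℚ ℚ⟮ζ⟯ :=
      Subfield.toIntermediateField (Subfield.comap (algebraMap ℚ⟮ζ⟯ ℂ)
        ((algebraMap ℝ ℂ).fieldRange)) hQ with hN
    have hFN : F ≤ N := by
      rw [hFdef]
      apply IntermediateField.adjoin_le_iff.mpr
      intro x hx
      rw [Set.mem_singleton_iff] at hx
      subst hx
      have : αK ∈ Subfield.comap (algebraMap ℚ⟮ζ⟯ ℂ) ((algebraMap ℝ ℂ).fieldRange) := by
        rw [Subfield.mem_comap, hαKmap, e1]
        exact ⟨_, rfl⟩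
      exact this
    have : algebraMap ℚ⟮ζ⟯ ℂ g ∈ (algebraMap ℝ ℂ).fieldRange := hFN hg
    rw [hgenmap] at this
    obtain ⟨r, hr⟩ := this
    have him : ζ.im = 0 := by rw [← hr]; simp
    have : ζ.im = Real.sin (2 * π / d) := by
      rw [hζdef]
      rw [show (2 * ↑π * Complex.I / ↑d : ℂ) = ((2 * π / d : ℝ) : ℂ) * Complex.I by
        push_cast; ring]
      exact Complex.exp_ofReal_mul_I_im _
    rw [this] at him
    have hpos : 0 < Real.sin (2 * π / d) := by
      apply Real.sin_pos_of_pos_of_lt_pi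
      · positivity
      · rw [div_lt_iff₀ (by positivity)]
        nlinarith [Real.pi_pos, (show (3:ℝ) ≤ d by exact_mod_cast hd)]
    linarith
  have hgint : IsIntegral ↥F g := IsIntegral.of_finite _ g
  have h2 : 2 ≤ Module.finrank ↥F ℚ⟮ζ⟯ := by
    have hdvd := minpoly.degree_dvd hgint
    have hne1 : (minpoly ↥F g).natDegree ≠ 1 := by
      intro h1
      rw [minpoly.natDegree_eq_one_iff] at h1
      obtain ⟨y, hy⟩ := h1
      apply hgF
      rw [← hy]
      exact y.2
    have hne0 : (minpoly ↥F g).natDegree ≠ 0 := by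
      have := minpoly.natDegree_pos hgint
      omega
    have hposrank : 0 < Module.finrank ↥F ℚ⟮ζ⟯ := Module.finrank_pos
    have := Nat.le_of_dvd hposrank hdvd
    omega
  calc (minpoly ℚ αK).natDegree * 2 = Module.finrank ℚ ↥F * 2 := by rw [hrank1]
    _ ≤ Module.finrank ℚ ↥F * Module.finrank ↥F ℚ⟮ζ⟯ := by
        apply Nat.mul_le_mul_left _ h2
    _ = Module.finrank ℚ ℚ⟮ζ⟯ := Module.finrank_mul_finrank ℚ ↥F ℚ⟮ζ⟯
    _ = d.totient := hrank2

/-! ### counting -/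

lemma cop_sub {d j : ℕ} (h : j ≤ d) : (d - j).Coprime d ↔ j.Coprime d := by
  have h1 : d - (d - j) = j := by omega
  unfold Nat.Coprime
  rw [← Nat.gcd_sub_self_right (Nat.sub_le d j), h1, Nat.gcd_comm, Nat.gcd_sub_self_right h]

lemma card_Sd (d : ℕ) (hd : 3 ≤ d) : 2 * (Sd d).card = d.totient := by
  have htot : d.totient = ((Finset.range d).filter (fun j => Nat.Coprime j d)).card := by
    rw [Nat.totient_eq_card_coprime]
    congr 1
    apply Finset.filter_congr
    intro x _
    simp [Nat.coprime_comm]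
  have hsplit : (Finset.range d).filter (fun j => Nat.Coprime j d) =
      (Sd d) ∪ ((Finset.Ico (d/2+1) d).filter (fun j => Nat.Coprime j d)) := by
    rw [Sd, Finset.range_eq_Ico, Finset.range_eq_Ico, ← Finset.filter_union,
      Finset.Ico_union_Ico_eq_Ico (by omega) (by omega), ← Finset.range_eq_Ico]
  have hdisj : Disjoint (Sd d) ((Finset.Ico (d/2+1) d).filter (fun j => Nat.Coprime j d)) := by
    apply Finset.disjoint_filter_filter
    rw [Finset.range_eq_Ico]
    exact Finset.Ico_disjoint_Ico_consecutive 0 (d/2+1) d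
  have hcard : ((Finset.Ico (d/2+1) d).filter (fun j => Nat.Coprime j d)).card = (Sd d).card := by
    apply Finset.card_bij' (fun j _ => d - j) (fun j _ => d - j)
    · intro a ha
      simp only [Finset.mem_filter, Finset.mem_Ico] at ha
      simp only [Sd, Finset.mem_filter, Finset.mem_range]
      exact ⟨by omega, (cop_sub (by omega)).mpr ha.2⟩
    · intro a ha
      simp only [Sd, Finset.mem_filter, Finset.mem_range] at ha
      simp only [Finset.mem_filter, Finset.mem_Ico]
      have ha1 : 1 ≤ a := by
        rcases Nat.eq_zero_or_pos a with h | h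
        · exfalso; subst h
          have := ha.2
          simp [Nat.Coprime] at this
          omega
        · exact h
      have hne : 2 * a ≠ d := by
        intro h
        have hdvd : a ∣ d := ⟨2, by omega⟩
        have h1 : a ∣ 1 := ha.2 ▸ Nat.dvd_gcd dvd_rfl hdvd
        rw [Nat.dvd_one] at h1
        omega
      refine ⟨by omega, (cop_sub (by omega)).mpr ha.2⟩
    · intro a ha; simp only [Finset.mem_filter, Finset.mem_Ico] at ha; omega
    · intro a ha
      simp only [Sd, Finset.mem_filter, Finset.mem_range] at ha
      omega
  rw [htot, hsplit, Finset.card_union_of_disjoint hdisj, hcard]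
  ring

/-! ### factorization of psiR -/

lemma psiR_monic (d : ℕ) (hd : d ≠ 0) : (psiR d).Monic :=
  (minpoly.monic (cos_integral d hd)).map _

lemma psiR_eval (d : ℕ) (x : ℝ) :
    (psiR d).eval x = Polynomial.aeval x (minpoly ℚ (2 * Real.cos (2 * π / d))) := by
  rw [psiR, Polynomial.eval_map, Polynomial.aeval_def]

lemma psiR_eq (d : ℕ) (hd : d ≠ 0) :
    psiR d = ∏ j ∈ Sd d, (X - C (2 * Real.cos (2 * π * (j:ℝ) / (d:ℝ)))) := by
  have hmono : (psiR d).Monic := psiR_monic d hd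
  have hne : psiR d ≠ 0 := hmono.ne_zero
  have hroot : ∀ j ∈ Sd d, (psiR d).IsRoot (2 * Real.cos (2 * π * (j:ℝ) / (d:ℝ))) := by
    intro j hj
    rw [Sd, Finset.mem_filter] at hj
    rw [Polynomial.IsRoot, psiR_eval]
    exact aeval_conj d j hd hj.2
  have hinj : Set.InjOn (fun j : ℕ => 2 * Real.cos (2 * π * (j:ℝ) / (d:ℝ))) (Sd d) := by
    intro a ha b hb hab
    simp only [Sd, Finset.coe_filter, Finset.mem_range, Set.mem_setOf_eq] at ha hb
    have hd0 : (0:ℝ) < d := by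
      have := Nat.pos_of_ne_zero hd; exact_mod_cast this
    have hmem : ∀ c : ℕ, c < d/2 + 1 → (2 * π * (c:ℝ) / (d:ℝ)) ∈ Set.Icc 0 π := by
      intro c hc
      constructor
      · positivity
      · rw [div_le_iff₀ hd0]
        have h2c : ((2 * c : ℕ) : ℝ) ≤ (d : ℝ) := by exact_mod_cast (by omega : 2 * c ≤ d)
        push_cast at h2c
        nlinarith [Real.pi_pos]
    have hab' : 2 * Real.cos (2 * π * (a:ℝ) / (d:ℝ)) = 2 * Real.cos (2 * π * (b:ℝ) / (d:ℝ)) := hab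
    have hcos : Real.cos (2 * π * (a:ℝ) / (d:ℝ)) = Real.cos (2 * π * (b:ℝ) / (d:ℝ)) := by
      linarith
    have heq := Real.injOn_cos (hmem a ha.1) (hmem b hb.1) hcos
    have hdd : (2 * π / (d:ℝ)) ≠ 0 := by positivity
    have e1 : (2*π/(d:ℝ)) * (a:ℝ) = (2*π/(d:ℝ)) * (b:ℝ) := by
      rw [div_mul_eq_mul_div, div_mul_eq_mul_div]
      exact heq
    exact_mod_cast mul_left_cancel₀ hdd e1
  have hdvd : ∏ j ∈ Sd d, (X - C (2 * Real.cos (2 * π * (j:ℝ) / (d:ℝ)))) ∣ psiR d :=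
    prod_X_sub_C_dvd _ _ _ hne hinj hroot
  have hMmonic : (∏ j ∈ Sd d, (X - C (2 * Real.cos (2 * π * (j:ℝ) / (d:ℝ))))).Monic :=
    Polynomial.monic_prod_of_monic _ _ (fun i _ => Polynomial.monic_X_sub_C _)
  have hMdeg : (∏ j ∈ Sd d, (X - C (2 * Real.cos (2 * π * (j:ℝ) / (d:ℝ))))).natDegree
      = (Sd d).card := by
    rw [Polynomial.natDegree_prod _ _ (fun i _ => Polynomial.X_sub_C_ne_zero _)]
    simp only [Polynomial.natDegree_X_sub_C, Finset.sum_const, smul_eq_mul, mul_one]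
  have hdegp : (psiR d).natDegree = (minpoly ℚ (2 * Real.cos (2 * π / d))).natDegree :=
    Polynomial.natDegree_map_eq_of_injective (algebraMap ℚ ℝ).injective _
  have hdegle : (psiR d).natDegree ≤ (Sd d).card := by
    rcases Nat.lt_or_ge d 3 with h3 | h3
    · rcases (by omega : d = 1 ∨ d = 2) with rfl | rfl
      · have hv : 2 * Real.cos (2 * π / ((1:ℕ):ℝ)) = algebraMap ℚ ℝ 2 := by
          norm_num [Real.cos_two_pi]
        have hS : (Sd 1).card = 1 := by decide
        rw [hdegp, hv, minpoly.eq_X_sub_C, hS, Polynomial.natDegree_X_sub_C]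
      · have hv : 2 * Real.cos (2 * π / ((2:ℕ):ℝ)) = algebraMap ℚ ℝ (-2) := by
          norm_num [Real.cos_pi]
        have hS : (Sd 2).card = 1 := by decide
        rw [hdegp, hv, minpoly.eq_X_sub_C, hS, Polynomial.natDegree_X_sub_C]
    · have h1 := deg_le d h3
      have h2 := card_Sd d h3
      omega
  have hdegge : (Sd d).card ≤ (psiR d).natDegree := by
    rw [← hMdeg]
    exact Polynomial.natDegree_le_of_dvd hdvd hne
  obtain ⟨q, hq⟩ := hdvd
  have hqmonic : q.Monic := by
    have h := hq ▸ hmono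
    exact hMmonic.of_mul_monic_left h
  have hqdeg : q.natDegree = 0 := by
    have h := hq ▸ (le_antisymm hdegle hdegge)
    rw [Polynomial.natDegree_mul hMmonic.ne_zero hqmonic.ne_zero, hMdeg] at h
    omega
  rw [hq, Polynomial.eq_one_of_monic_natDegree_zero hqmonic hqdeg, mul_one]


lemma T_aux : ∀ k : ℕ, (Polynomial.Chebyshev.T ℝ (k:ℤ)).natDegree ≤ k ∧
    (Polynomial.Chebyshev.T ℝ (k:ℤ)).coeff k = if k = 0 then 1 else 2^(k-1) := by
  intro k
  induction k using Nat.strong_induction_on with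
  | _ k ih =>
    match k with
    | 0 => simp [Polynomial.Chebyshev.T_zero]
    | 1 => simp [Polynomial.Chebyshev.T_one]
    | (j+2) =>
      obtain ⟨hd1, hc1⟩ := ih (j+1) (by omega)
      obtain ⟨hd0, hc0⟩ := ih j (by omega)
      have hT : Polynomial.Chebyshev.T ℝ ((j+2 : ℕ):ℤ) =
          2 * X * Polynomial.Chebyshev.T ℝ ((j+1:ℕ):ℤ) - Polynomial.Chebyshev.T ℝ (j:ℤ) := by
        push_cast
        exact Polynomial.Chebyshev.T_add_two ℝ j
      constructor
      · rw [hT]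
        apply le_trans (Polynomial.natDegree_sub_le _ _)
        apply max_le
        · apply le_trans (Polynomial.natDegree_mul_le)
          have : (2 * X : ℝ[X]).natDegree ≤ 1 := by
            apply le_trans (Polynomial.natDegree_mul_le)
            simp
          omega
        · omega
      · rw [hT, Polynomial.coeff_sub]
        have hz : (Polynomial.Chebyshev.T ℝ (j:ℤ)).coeff (j+2) = 0 :=
          Polynomial.coeff_eq_zero_of_natDegree_lt (by omega)
        have hmul : (2 * X * Polynomial.Chebyshev.T ℝ ((j+1:ℕ):ℤ)).coeff (j+2)
            = 2 * (Polynomial.Chebyshev.T ℝ ((j+1:ℕ):ℤ)).coeff (j+1) := by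
          rw [mul_assoc, (map_ofNat Polynomial.C 2).symm, Polynomial.coeff_C_mul,
            Polynomial.coeff_X_mul]
        rw [hmul, hc1, hz]
        norm_num [pow_succ]
        ring

lemma cos_mem_Icc (n k : ℕ) (hn : n ≠ 0) (hk : 2 * k ≤ n) :
    (2 * π * (k:ℝ) / (n:ℝ)) ∈ Set.Icc 0 π := by
  have hn0 : (0:ℝ) < n := by exact_mod_cast Nat.pos_of_ne_zero hn
  constructor
  · positivity
  · rw [div_le_iff₀ hn0]
    have h2c : ((2 * k : ℕ) : ℝ) ≤ (n : ℝ) := by exact_mod_cast hk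
    push_cast at h2c
    nlinarith [Real.pi_pos]

lemma cos_injOn_range (n m : ℕ) (hm : 1 ≤ m) (hn : n = 2 * m) :
    Set.InjOn (fun k : ℕ => Real.cos (2 * π * (k:ℝ) / (n:ℝ)))
      (Finset.range (m+1)) := by
  intro a ha b hb hab
  simp only [Finset.coe_range, Set.mem_Iio] at ha hb
  have hn0 : n ≠ 0 := by omega
  have heq := Real.injOn_cos (cos_mem_Icc n a hn0 (by omega)) (cos_mem_Icc n b hn0 (by omega)) hab
  have hdd : (2 * π / (n:ℝ)) ≠ 0 := by
    have : (0:ℝ) < n := by exact_mod_cast Nat.pos_of_ne_zero hn0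
    positivity
  have e1 : (2*π/(n:ℝ)) * (a:ℝ) = (2*π/(n:ℝ)) * (b:ℝ) := by
    rw [div_mul_eq_mul_div, div_mul_eq_mul_div]
    exact heq
  exact_mod_cast mul_left_cancel₀ hdd e1

lemma rhs_eq (m n : ℕ) (hm : 1 ≤ m) (hn : n = 2 * m) :
    2 * (Polynomial.Chebyshev.T ℝ (m + 1) - Polynomial.Chebyshev.T ℝ (m - 1)) =
      C ((2:ℝ)^(m+1)) * ∏ k ∈ Finset.range (m+1), (X - C (Real.cos (2*π*(k:ℝ)/(n:ℝ)))) := by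
  set P : ℝ[X] := ∏ k ∈ Finset.range (m+1), (X - C (Real.cos (2*π*(k:ℝ)/(n:ℝ)))) with hPdef
  have hPmonic : P.Monic :=
    Polynomial.monic_prod_of_monic _ _ (fun i _ => Polynomial.monic_X_sub_C _)
  have hPdeg : P.natDegree = m + 1 := by
    rw [hPdef, Polynomial.natDegree_prod _ _ (fun i _ => Polynomial.X_sub_C_ne_zero _)]
    simp only [Polynomial.natDegree_X_sub_C, Finset.sum_const, smul_eq_mul, mul_one,
      Finset.card_range]
  set Q : ℝ[X] := 2 * (Polynomial.Chebyshev.T ℝ (m + 1) - Polynomial.Chebyshev.T ℝ (m - 1))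
    with hQdef
  have hidx1 : ((m:ℤ)+1) = ((m+1:ℕ):ℤ) := by push_cast; ring
  have hidx0 : ((m:ℤ)-1) = ((m-1:ℕ):ℤ) := by omega
  set D : ℝ[X] := Q - C ((2:ℝ)^(m+1)) * P with hDdef
  have hcoeffD : D.coeff (m+1) = 0 := by
    have hc1 : (Polynomial.Chebyshev.T ℝ ((m:ℤ) + 1)).coeff (m+1) = 2^m := by
      rw [hidx1]
      have := (T_aux (m+1)).2
      simpa using this
    have hc0 : (Polynomial.Chebyshev.T ℝ ((m:ℤ) - 1)).coeff (m+1) = 0 := by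
      rw [hidx0]
      exact Polynomial.coeff_eq_zero_of_natDegree_lt (lt_of_le_of_lt (T_aux (m-1)).1 (by omega))
    have hcP : (C ((2:ℝ)^(m+1)) * P).coeff (m+1) = 2^(m+1) := by
      rw [Polynomial.coeff_C_mul, ← hPdeg, hPmonic.coeff_natDegree, mul_one]
    rw [hDdef, Polynomial.coeff_sub, hcP, hQdef, (map_ofNat Polynomial.C 2).symm,
      Polynomial.coeff_C_mul, Polynomial.coeff_sub, hc1, hc0]
    ring
  have hdegD : D.natDegree ≤ m + 1 := by
    rw [hDdef]
    apply le_trans (Polynomial.natDegree_sub_le _ _)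
    apply max_le
    · rw [hQdef]
      apply le_trans (Polynomial.natDegree_mul_le)
      have h2 : (2:ℝ[X]).natDegree = 0 := by
        rw [(map_ofNat Polynomial.C 2).symm, Polynomial.natDegree_C]
      have := Polynomial.natDegree_sub_le (Polynomial.Chebyshev.T ℝ ((m:ℤ) + 1))
        (Polynomial.Chebyshev.T ℝ ((m:ℤ) - 1))
      have hA : (Polynomial.Chebyshev.T ℝ ((m:ℤ) + 1)).natDegree ≤ m + 1 := by
        rw [hidx1]; exact (T_aux (m+1)).1
      have hB : (Polynomial.Chebyshev.T ℝ ((m:ℤ) - 1)).natDegree ≤ m + 1 := by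
        rw [hidx0]; exact le_trans (T_aux (m-1)).1 (by omega)
      omega
    · apply le_trans (Polynomial.natDegree_mul_le)
      rw [Polynomial.natDegree_C, hPdeg]
      omega
  have hroots : ∀ k ∈ Finset.range (m+1), D.IsRoot (Real.cos (2*π*(k:ℝ)/(n:ℝ))) := by
    intro k hk
    have hPzero : P.eval (Real.cos (2*π*(k:ℝ)/(n:ℝ))) = 0 := by
      rw [hPdef, Polynomial.eval_prod]
      apply Finset.prod_eq_zero hk
      simp
    have hQzero : Q.eval (Real.cos (2*π*(k:ℝ)/(n:ℝ))) = 0 := by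
      rw [hQdef]
      set θ : ℝ := 2*π*(k:ℝ)/(n:ℝ) with hθ
      rw [Polynomial.eval_mul, Polynomial.eval_sub, Polynomial.Chebyshev.T_real_cos,
        Polynomial.Chebyshev.T_real_cos]
      have hsin : Real.sin ((m:ℝ) * θ) = 0 := by
        have hmθ : (m:ℝ) * θ = (k:ℝ) * π := by
          rw [hθ, hn]
          have hm0 : (m:ℝ) ≠ 0 := Nat.cast_ne_zero.mpr (by omega)
          push_cast
          field_simp
        rw [hmθ]
        exact Real.sin_nat_mul_pi k
      have := Real.cos_sub_cos ((((m:ℤ)+1) : ℝ) * θ) ((((m:ℤ)-1) : ℝ) * θ)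
      have harg1 : (((((m:ℤ)+1) : ℝ) * θ + (((m:ℤ)-1) : ℝ) * θ) / 2) = (m:ℝ) * θ := by
        push_cast; ring
      rw [harg1, hsin] at this
      push_cast at this ⊢
      rw [this]
      ring
    rw [Polynomial.IsRoot, hDdef, Polynomial.eval_sub, hQzero, Polynomial.eval_mul, hPzero]
    ring
  have hD : D = 0 := by
    by_contra hD0
    have hdvd : P ∣ D := by
      rw [hPdef]
      exact prod_X_sub_C_dvd _ _ _ hD0 (cos_injOn_range n m hm hn) hroots
    have hge : m + 1 ≤ D.natDegree := hPdeg ▸ Polynomial.natDegree_le_of_dvd hdvd hD0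
    have hdeq : D.natDegree = m + 1 := le_antisymm hdegD hge
    have : D.leadingCoeff = 0 := by rw [Polynomial.leadingCoeff, hdeq]; exact hcoeffD
    exact hD0 (Polynomial.leadingCoeff_eq_zero.mp this)
  have := sub_eq_zero.mp hD
  rw [hQdef] at this
  exact this

/-- Watkins–Zeitlin, even case: for `n = 2m`,
`∏_{d ∣ n} ψ_d(2t) = 2 (T_{m+1}(t) − T_{m−1}(t))`. -/
theorem prod_psi_two_X_even (m n : ℕ) (hm : 1 ≤ m) (hn : n = 2 * m) :
    ∏ d ∈ n.divisors, (psiR d).comp (2 * X) =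
      2 * (Polynomial.Chebyshev.T ℝ (m + 1) - Polynomial.Chebyshev.T ℝ (m - 1)) := by
  have hn0 : n ≠ 0 := by omega
  rw [rhs_eq m n hm hn]
  have step1 : ∏ d ∈ n.divisors, (psiR d).comp (2 * X) =
      ∏ d ∈ n.divisors, ∏ j ∈ Sd d,
        ((2:ℝ[X]) * X - C (2 * Real.cos (2 * π * (j:ℝ) / (d:ℝ)))) := by
    apply Finset.prod_congr rfl
    intro d hd
    have hd0 : d ≠ 0 := (Nat.pos_of_mem_divisors hd).ne'
    rw [psiR_eq d hd0, Polynomial.prod_comp]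
    apply Finset.prod_congr rfl
    intro j _
    rw [Polynomial.sub_comp, Polynomial.X_comp, Polynomial.C_comp]
  rw [step1]
  rw [Finset.prod_sigma' (n.divisors) (fun d => Sd d)
    (fun d j => ((2:ℝ[X]) * X - C (2 * Real.cos (2 * π * (j:ℝ) / (d:ℝ)))))]
  have step2 : ∏ x ∈ (n.divisors).sigma (fun d => Sd d),
      ((2:ℝ[X]) * X - C (2 * Real.cos (2 * π * (x.2:ℝ) / (x.1:ℝ)))) =
      ∏ k ∈ Finset.range (m+1),
      ((2:ℝ[X]) * X - C (2 * Real.cos (2 * π * (k:ℝ) / (n:ℝ)))) := by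
    refine Finset.prod_bij' (fun x _ => x.2 * (n / x.1))
      (fun k _ => ⟨n / Nat.gcd k n, k / Nat.gcd k n⟩) ?_ ?_ ?_ ?_ ?_
    · -- hi : maps into range (m+1)
      rintro ⟨d, j⟩ hx
      simp only [Finset.mem_sigma, Nat.mem_divisors, Sd, Finset.mem_filter,
        Finset.mem_range] at hx
      obtain ⟨⟨hdvd, -⟩, hjlt, hcop⟩ := hx
      have hd0 : d ≠ 0 := by
        rintro rfl
        rw [Nat.zero_dvd] at hdvd
        omega
      have hde : d * (n / d) = n := Nat.mul_div_cancel' hdvd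
      have h2j : 2 * j ≤ d := by omega
      have h1 : 2 * (j * (n / d)) ≤ n := by
        calc 2 * (j * (n / d)) = (2 * j) * (n / d) := by ring
          _ ≤ d * (n / d) := Nat.mul_le_mul_right _ h2j
          _ = n := hde
      simp only [Finset.mem_range]
      omega
    · -- hj : maps into sigma
      intro k hk
      simp only [Finset.mem_range] at hk
      have hgdvdn : Nat.gcd k n ∣ n := Nat.gcd_dvd_right k n
      have hgdvdk : Nat.gcd k n ∣ k := Nat.gcd_dvd_left k n
      have hgpos : 0 < Nat.gcd k n := Nat.gcd_pos_of_pos_right k (Nat.pos_of_ne_zero hn0)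
      simp only [Finset.mem_sigma, Nat.mem_divisors, Sd, Finset.mem_filter, Finset.mem_range]
      refine ⟨⟨Nat.div_dvd_of_dvd hgdvdn, hn0⟩, ?_, Nat.coprime_div_gcd_div_gcd hgpos⟩
      obtain ⟨k', hk'⟩ := hgdvdk
      obtain ⟨n', hn'⟩ := hgdvdn
      have hkq := Nat.mul_div_cancel_left k' hgpos
      rw [← hk'] at hkq
      have hnq := Nat.mul_div_cancel_left n' hgpos
      rw [← hn'] at hnq
      rw [hkq, hnq]
      have h2k : 2 * k ≤ n := by omega
      have hmul : Nat.gcd k n * (2 * k') ≤ Nat.gcd k n * n' := by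
        calc Nat.gcd k n * (2 * k') = 2 * (Nat.gcd k n * k') := by ring
          _ = 2 * k := by rw [← hk']
          _ ≤ n := h2k
          _ = Nat.gcd k n * n' := hn'
      have := Nat.le_of_mul_le_mul_left hmul hgpos
      omega
    · -- left inverse
      rintro ⟨d, j⟩ hx
      simp only [Finset.mem_sigma, Nat.mem_divisors, Sd, Finset.mem_filter,
        Finset.mem_range] at hx
      obtain ⟨⟨hdvd, -⟩, hjlt, hcop⟩ := hx
      have hd0 : d ≠ 0 := by
        rintro rfl
        rw [Nat.zero_dvd] at hdvd
        omega
      show (⟨n / Nat.gcd (j * (n / d)) n, (j * (n / d)) / Nat.gcd (j * (n / d)) n⟩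
          : (_ : ℕ) × ℕ) = ⟨d, j⟩
      set e := n / d with he
      have hde : d * e = n := Nat.mul_div_cancel' hdvd
      have he0 : 0 < e := by
        rcases Nat.eq_zero_or_pos e with h | h
        · rw [h, mul_zero] at hde; omega
        · exact h
      have hgcd : Nat.gcd (j * e) n = e := by
        rw [← hde, mul_comm d e, mul_comm j e, Nat.gcd_mul_left]
        rw [Nat.Coprime] at hcop
        rw [hcop, mul_one]
      have h1 : n / Nat.gcd (j * e) n = d := by
        rw [hgcd, ← hde, mul_comm d e, Nat.mul_div_cancel_left _ he0]
      have h2 : (j * e) / Nat.gcd (j * e) n = j := by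
        rw [hgcd, mul_comm j e, Nat.mul_div_cancel_left _ he0]
      rw [h1, h2]
    · -- right inverse
      intro k hk
      have hgdvdn : Nat.gcd k n ∣ n := Nat.gcd_dvd_right k n
      have hgdvdk : Nat.gcd k n ∣ k := Nat.gcd_dvd_left k n
      show (k / Nat.gcd k n) * (n / (n / Nat.gcd k n)) = k
      rw [Nat.div_div_self hgdvdn hn0, Nat.div_mul_cancel hgdvdk]
    · -- values agree
      rintro ⟨d, j⟩ hx
      simp only [Finset.mem_sigma, Nat.mem_divisors, Sd, Finset.mem_filter,
        Finset.mem_range] at hx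
      obtain ⟨⟨hdvd, -⟩, hjlt, hcop⟩ := hx
      have hd0 : d ≠ 0 := by
        rintro rfl
        rw [Nat.zero_dvd] at hdvd
        omega
      have hde : d * (n / d) = n := Nat.mul_div_cancel' hdvd
      have he0 : 0 < n / d := by
        rcases Nat.eq_zero_or_pos (n / d) with h | h
        · rw [h, mul_zero] at hde; omega
        · exact h
      have hcos : (2 * π * (j:ℝ) / (d:ℝ)) = 2 * π * ((j * (n / d) : ℕ):ℝ) / ((n:ℕ):ℝ) := by
        have hnr : (n:ℝ) = (d:ℝ) * ((n / d : ℕ):ℝ) := by exact_mod_cast hde.symm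
        rw [hnr]
        have hd0r : (d:ℝ) ≠ 0 := Nat.cast_ne_zero.mpr hd0
        have he0r : ((n / d : ℕ):ℝ) ≠ 0 := Nat.cast_ne_zero.mpr (by omega)
        push_cast
        field_simp
      show ((2:ℝ[X]) * X - C (2 * Real.cos (2 * π * (j:ℝ) / (d:ℝ)))) =
        ((2:ℝ[X]) * X - C (2 * Real.cos (2 * π * ((j * (n / d) : ℕ):ℝ) / ((n:ℕ):ℝ))))
      rw [hcos]
  rw [step2]
  have step3 : ∀ k ∈ Finset.range (m+1),
      ((2:ℝ[X]) * X - C (2 * Real.cos (2 * π * (k:ℝ) / (n:ℝ)))) =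
      C (2:ℝ) * (X - C (Real.cos (2 * π * (k:ℝ) / (n:ℝ)))) := by
    intro k _
    rw [Polynomial.C_mul, (map_ofNat Polynomial.C 2).symm]
    ring
  rw [Finset.prod_congr rfl step3, Finset.prod_mul_distrib, Finset.prod_const,
    Finset.card_range, ← Polynomial.C_pow]

end
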